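/- Let ρ₁, ρ₂, ρ₃ be complex numbers with ρ₁ + ρ₂ + ρ₃ = 0, and set τ₁ = ρ₂·conj(ρ₃), τ₂ = ρ₃·conj(ρ₁), τ₃ = ρ₁·conj(ρ₂), ξ = (1/4)(|ρ₁|² + |ρ₂|² + |ρ₃|²), α = (1/2)|ρ₁² + ρ₂² + ρ₃²|. Then the following are equivalent: (i) τ₁, τ₂ and τ₃ are all real; (ii) there exist a real number θ and real numbers r₁, r₂, r₃ with ρ_k = r_k·e^{iθ} for k = 1,2,3; (iii) 4ξ² = α². -/

import Mathlib

/-- Characterization of the García-Parrado (super-energy) non-radiative fields at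
the eigenvalue level (Theorem 5): the complex Bel–Robinson eigenvalues `τᵢ` are
all real iff the Weyl eigenvalues lie on a real line through the origin
(`ρₖ = rₖ e^{iθ}`), iff `4ξ² = α²` (i.e. `ξ_Q = 0`). -/
theorem garciaParrado_non_radiative_characterization (ρ₁ ρ₂ ρ₃ : ℂ)
    (hsum : ρ₁ + ρ₂ + ρ₃ = 0)
    (τ₁ τ₂ τ₃ : ℂ)
    (hτ₁ : τ₁ = ρ₂ * (starRingEnd ℂ) ρ₃)
    (hτ₂ : τ₂ = ρ₃ * (starRingEnd ℂ) ρ₁)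
    (hτ₃ : τ₃ = ρ₁ * (starRingEnd ℂ) ρ₂)
    (ξ α : ℝ)
    (hξ : ξ = (1/4) * (‖ρ₁‖ ^ 2 + ‖ρ₂‖ ^ 2 + ‖ρ₃‖ ^ 2))
    (hα : α = (1/2) * ‖ρ₁ ^ 2 + ρ₂ ^ 2 + ρ₃ ^ 2‖) :
    ((τ₁.im = 0 ∧ τ₂.im = 0 ∧ τ₃.im = 0) ↔
      (∃ (θ r₁ r₂ r₃ : ℝ), ρ₁ = (r₁ : ℂ) * Complex.exp (θ * Complex.I) ∧
        ρ₂ = (r₂ : ℂ) * Complex.exp (θ * Complex.I) ∧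
        ρ₃ = (r₃ : ℂ) * Complex.exp (θ * Complex.I))) ∧
    ((∃ (θ r₁ r₂ r₃ : ℝ), ρ₁ = (r₁ : ℂ) * Complex.exp (θ * Complex.I) ∧
        ρ₂ = (r₂ : ℂ) * Complex.exp (θ * Complex.I) ∧
        ρ₃ = (r₃ : ℂ) * Complex.exp (θ * Complex.I)) ↔
      4 * ξ ^ 2 = α ^ 2) := by
  have h3 : ρ₃ = -(ρ₁ + ρ₂) := by linear_combination hsum
  subst h3 hτ₁ hτ₂ hτ₃ hξ hα
  -- master scalar condition
  set P : Prop := (ρ₁ * (starRingEnd ℂ) ρ₂).im = 0 with hPdef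
  -- (i) ↔ P
  have hi : ((ρ₂ * (starRingEnd ℂ) (-(ρ₁ + ρ₂))).im = 0 ∧
      ((-(ρ₁ + ρ₂)) * (starRingEnd ℂ) ρ₁).im = 0 ∧
      (ρ₁ * (starRingEnd ℂ) ρ₂).im = 0) ↔ P := by
    rw [hPdef]
    simp only [map_neg, map_add, Complex.mul_im, Complex.neg_re, Complex.neg_im,
      Complex.add_re, Complex.add_im, Complex.conj_re, Complex.conj_im]
    constructor
    · rintro ⟨h1, h2, h3⟩; linarith
    · intro h; refine ⟨by nlinarith, by nlinarith, by nlinarith⟩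
  -- (ii) ↔ P
  have hii : (∃ (θ r₁ r₂ r₃ : ℝ), ρ₁ = (r₁ : ℂ) * Complex.exp (θ * Complex.I) ∧
        ρ₂ = (r₂ : ℂ) * Complex.exp (θ * Complex.I) ∧
        (-(ρ₁ + ρ₂)) = (r₃ : ℂ) * Complex.exp (θ * Complex.I)) ↔ P := by
    constructor
    · rintro ⟨θ, r₁, r₂, r₃, e1, e2, -⟩
      have he : Complex.exp (↑θ * Complex.I) * (starRingEnd ℂ) (Complex.exp (↑θ * Complex.I)) = 1 := by
        rw [Complex.mul_conj]
        norm_cast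
        rw [Complex.normSq_eq_norm_sq, Complex.norm_exp_ofReal_mul_I]; norm_num
      have : ρ₁ * (starRingEnd ℂ) ρ₂ = ((r₁ * r₂ : ℝ) : ℂ) := by
        rw [e1, e2, map_mul]
        push_cast
        have hc : (starRingEnd ℂ) ((r₂ : ℝ) : ℂ) = ((r₂ : ℝ) : ℂ) := Complex.conj_ofReal r₂
        rw [hc]
        calc (r₁ : ℂ) * Complex.exp (↑θ * Complex.I) *
              ((r₂ : ℂ) * (starRingEnd ℂ) (Complex.exp (↑θ * Complex.I)))
            = (r₁ : ℂ) * (r₂ : ℂ) *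
              (Complex.exp (↑θ * Complex.I) * (starRingEnd ℂ) (Complex.exp (↑θ * Complex.I))) := by ring
          _ = (r₁ : ℂ) * (r₂ : ℂ) := by rw [he, mul_one]
      rw [hPdef, this, Complex.ofReal_im]
    · intro hP
      by_cases h0 : ρ₁ = 0
      · refine ⟨ρ₂.arg, 0, ‖ρ₂‖, -‖ρ₂‖, by simp [h0], ?_, ?_⟩
        · exact (Complex.norm_mul_exp_arg_mul_I ρ₂).symm
        · rw [h0]
          push_cast
          linear_combination Complex.norm_mul_exp_arg_mul_I ρ₂
      · set A : ℝ := ‖ρ₁‖ with hA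
        have hA0 : (A : ℂ) ≠ 0 := by
          have : A ≠ 0 := by rw [hA]; exact norm_ne_zero_iff.mpr h0
          exact_mod_cast this
        have h1 : (A : ℂ) * Complex.exp (ρ₁.arg * Complex.I) = ρ₁ :=
          Complex.norm_mul_exp_arg_mul_I ρ₁
        set t : ℝ := (ρ₁ * (starRingEnd ℂ) ρ₂).re with ht
        have hP' : (ρ₁ * (starRingEnd ℂ) ρ₂).im = 0 := hP
        have htC : ρ₁ * (starRingEnd ℂ) ρ₂ = (t : ℂ) := by
          apply Complex.ext
          · simp [ht]
          · rw [Complex.ofReal_im]; exact hP' 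
        have hconj : (starRingEnd ℂ) ρ₁ * ρ₂ = (t : ℂ) := by
          have := congrArg (starRingEnd ℂ) htC
          simpa [map_mul, mul_comm] using this
        have hmc : ρ₁ * (starRingEnd ℂ) ρ₁ = ((A : ℂ)) ^ 2 := by
          rw [Complex.mul_conj]
          norm_cast
          exact Complex.normSq_eq_norm_sq ρ₁
        have h4 : (A : ℂ) ^ 2 * ρ₂ = (t : ℂ) * ρ₁ := by
          linear_combination ρ₁ * hconj - ρ₂ * hmc
        have h2 : (A : ℂ) * ρ₂ = (t : ℂ) * Complex.exp (ρ₁.arg * Complex.I) := by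
          refine mul_left_cancel₀ hA0 ?_
          linear_combination h4 - (t : ℂ) * h1
        have hρ₂ : ρ₂ = ((t / A : ℝ) : ℂ) * Complex.exp (ρ₁.arg * Complex.I) := by
          push_cast
          rw [div_mul_eq_mul_div, eq_comm, div_eq_iff hA0]
          linear_combination -h2
        refine ⟨ρ₁.arg, A, t / A, -(A + t / A), h1.symm, hρ₂, ?_⟩
        have hρ₂' := hρ₂
        push_cast at hρ₂' ⊢
        linear_combination h1 - hρ₂' 
  -- (iii) ↔ P
  have hiii : (4 * ((1/4) * (‖ρ₁‖ ^ 2 + ‖ρ₂‖ ^ 2 + ‖-(ρ₁ + ρ₂)‖ ^ 2)) ^ 2 =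
      ((1/2) * ‖ρ₁ ^ 2 + ρ₂ ^ 2 + (-(ρ₁ + ρ₂)) ^ 2‖) ^ 2) ↔ P := by
    have key : 4 * ((1/4) * (‖ρ₁‖ ^ 2 + ‖ρ₂‖ ^ 2 + ‖-(ρ₁ + ρ₂)‖ ^ 2)) ^ 2 -
        ((1/2) * ‖ρ₁ ^ 2 + ρ₂ ^ 2 + (-(ρ₁ + ρ₂)) ^ 2‖) ^ 2 =
        3 * ((ρ₁ * (starRingEnd ℂ) ρ₂).im) ^ 2 := by
      rw [mul_pow, mul_pow]
      rw [Complex.sq_norm, Complex.sq_norm, Complex.sq_norm, Complex.sq_norm]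
      simp only [Complex.normSq_apply, Complex.neg_re, Complex.neg_im, Complex.add_re,
        Complex.add_im, Complex.mul_re, Complex.mul_im, Complex.conj_re, Complex.conj_im,
        pow_two]
      ring
    rw [hPdef]
    constructor
    · intro h
      have h2 : 3 * ((ρ₁ * (starRingEnd ℂ) ρ₂).im) ^ 2 = 0 := by linarith [key]
      nlinarith [sq_nonneg ((ρ₁ * (starRingEnd ℂ) ρ₂).im)]
    · intro h
      have := key
      rw [h] at this
      linarith
  exact ⟨hi.trans hii.symm, hii.trans hiii.symm⟩
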